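/- Field-to-fluid correspondence (flat-target instance of the main duality): let φ = (φ₁,φ₂) : ℝ³ → ℝ² be a C² map and P̄ : ℝ² → ℝ a C¹ function, and suppose φ is σ₂-critical with potential P̄, i.e. τ_{σ₂}(φ)ₐ(x) = (∂ₐP̄)(φ(x)) for a = 1,2 and all x ∈ ℝ³. Then the vector field V = ∇φ₁ × ∇φ₂ satisfies the steady incompressible Euler equations on ℝ³ with Bernoulli function P = P̄∘φ: V × curl V = ∇(P̄∘φ) and div V = 0 everywhere; equivalently, (V·∇)V = −∇p and div V = 0 with pressure p = P̄∘φ − ½|V|². -/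

import Mathlib

open scoped BigOperators

/-- Partial derivative `∂ⱼ f` of a scalar function on `ℝ³`. -/
noncomputable def pd (j : Fin 3) (f : (Fin 3 → ℝ) → ℝ) (x : Fin 3 → ℝ) : ℝ :=
  fderiv ℝ f x (Pi.single j 1)

/-- Cross product on `ℝ³`. -/
def cross (a b : Fin 3 → ℝ) : Fin 3 → ℝ :=
  ![a 1 * b 2 - a 2 * b 1, a 2 * b 0 - a 0 * b 2, a 0 * b 1 - a 1 * b 0]

/-- Curl of a vector field on `ℝ³`. -/
noncomputable def curl (v : (Fin 3 → ℝ) → Fin 3 → ℝ) (x : Fin 3 → ℝ) : Fin 3 → ℝ :=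
  ![pd 1 (fun y => v y 2) x - pd 2 (fun y => v y 1) x,
    pd 2 (fun y => v y 0) x - pd 0 (fun y => v y 2) x,
    pd 0 (fun y => v y 1) x - pd 1 (fun y => v y 0) x]

/-- Cauchy–Green tensor `Cᵢⱼ = Σₐ ∂ᵢφₐ ∂ⱼφₐ` of a map `φ : ℝ³ → ℝ²`. -/
noncomputable def CG (φ : Fin 2 → (Fin 3 → ℝ) → ℝ) (i j : Fin 3) (x : Fin 3 → ℝ) : ℝ :=
  ∑ a : Fin 2, pd i (φ a) x * pd j (φ a) x

/-- `|Dφ|² = Σ_{a,i} (∂ᵢφₐ)²`. -/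
noncomputable def eDen (φ : Fin 2 → (Fin 3 → ℝ) → ℝ) (x : Fin 3 → ℝ) : ℝ :=
  ∑ a : Fin 2, ∑ i : Fin 3, (pd i (φ a) x) ^ 2

/-- σ₂-tension field `τ_{σ₂}(φ)ₐ = Σⱼ ∂ⱼ(|Dφ|² ∂ⱼφₐ − Σᵢ Cᵢⱼ ∂ᵢφₐ)`. -/
noncomputable def tau2 (φ : Fin 2 → (Fin 3 → ℝ) → ℝ) (a : Fin 2) (x : Fin 3 → ℝ) : ℝ :=
  ∑ j : Fin 3,
    pd j (fun y => eDen φ y * pd j (φ a) y - ∑ i : Fin 3, CG φ i j y * pd i (φ a) y) x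

/-- Fluid velocity `V = ∇φ₁ × ∇φ₂` associated to `φ`. -/
noncomputable def Vfield (φ : Fin 2 → (Fin 3 → ℝ) → ℝ) (x : Fin 3 → ℝ) : Fin 3 → ℝ :=
  cross (fun i => pd i (φ 0) x) (fun i => pd i (φ 1) x)

section Aux
variable {x : Fin 3 → ℝ} {j : Fin 3} {f g : (Fin 3 → ℝ) → ℝ}

lemma pd_sub (hf : DifferentiableAt ℝ f x) (hg : DifferentiableAt ℝ g x) :
    pd j (fun y => f y - g y) x = pd j f x - pd j g x := by
  simp [pd, fderiv_fun_sub hf hg]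

lemma pd_mul (hf : DifferentiableAt ℝ f x) (hg : DifferentiableAt ℝ g x) :
    pd j (fun y => f y * g y) x = pd j f x * g x + f x * pd j g x := by
  simp [pd, fderiv_fun_mul hf hg]; ring

lemma pd_sum {ι : Type*} (s : Finset ι) (A : ι → (Fin 3 → ℝ) → ℝ)
    (h : ∀ i ∈ s, DifferentiableAt ℝ (A i) x) :
    pd j (fun y => ∑ i ∈ s, A i y) x = ∑ i ∈ s, pd j (A i) x := by
  simp [pd, fderiv_fun_sum h]

lemma pd_sq (hf : DifferentiableAt ℝ f x) :
    pd j (fun y => f y ^ 2) x = 2 * f x * pd j f x := by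
  have h : (fun y => f y ^ 2) = fun y => f y * f y := by funext y; ring
  rw [h, pd_mul hf hf]; ring

lemma pd_const_mul (c : ℝ) (hf : DifferentiableAt ℝ f x) :
    pd j (fun y => c * f y) x = c * pd j f x := by
  simp [pd, fderiv_const_mul hf c]

lemma contDiff_pd (hf : ContDiff ℝ 2 f) (i : Fin 3) :
    ContDiff ℝ 1 (fun y => pd i f y) := by
  have h : ContDiff ℝ 1 (fderiv ℝ f) := hf.fderiv_right (by norm_num)
  exact h.clm_apply contDiff_const

lemma pd_comm (hf : ContDiff ℝ 2 f) (i j : Fin 3) (x : Fin 3 → ℝ) :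
    pd i (fun y => pd j f y) x = pd j (fun y => pd i f y) x := by
  have hc : DifferentiableAt ℝ (fderiv ℝ f) x :=
    ((hf.fderiv_right (by norm_num : (1:WithTop ℕ∞) + 1 ≤ 2)).differentiable one_ne_zero) x
  have hsymm : IsSymmSndFDerivAt ℝ f x := hf.contDiffAt.isSymmSndFDerivAt (by simp)
  have key : ∀ (k m : Fin 3), pd k (fun y => pd m f y) x
      = fderiv ℝ (fderiv ℝ f) x (Pi.single k 1) (Pi.single m 1) := by
    intro k m
    unfold pd
    rw [fderiv_clm_apply hc (differentiableAt_const _)]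
    simp
  rw [key i j, key j i, hsymm (Pi.single i 1) (Pi.single j 1)]

lemma fin3_cases {P : Fin 3 → Prop} (h0 : P 0) (h1 : P 1) (h2 : P 2) : ∀ i, P i := by
  intro i; fin_cases i <;> assumption

lemma pd_comp (φ : Fin 2 → (Fin 3 → ℝ) → ℝ) (hφ : ∀ a, ContDiff ℝ 2 (φ a))
    (Pbar : (Fin 2 → ℝ) → ℝ) (hPbar : ContDiff ℝ 1 Pbar) (i : Fin 3) (x : Fin 3 → ℝ) :
    pd i (fun y => Pbar (fun b => φ b y)) x
      = ∑ a : Fin 2, fderiv ℝ Pbar (fun b => φ b x) (Pi.single a 1) * pd i (φ a) x := by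
  have hΦ : HasFDerivAt (fun y (b : Fin 2) => φ b y)
      (ContinuousLinearMap.pi fun b => fderiv ℝ (φ b) x) x :=
    hasFDerivAt_pi.2 fun b => (((hφ b).differentiable two_ne_zero) x).hasFDerivAt
  have hP : HasFDerivAt Pbar (fderiv ℝ Pbar (fun b => φ b x)) (fun b => φ b x) :=
    ((hPbar.differentiable one_ne_zero) _).hasFDerivAt
  have hcomp : HasFDerivAt (fun y => Pbar (fun b => φ b y))
      ((fderiv ℝ Pbar (fun b => φ b x)).comp
        (ContinuousLinearMap.pi fun b => fderiv ℝ (φ b) x)) x := hP.comp x hΦ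
  unfold pd
  rw [hcomp.fderiv, ContinuousLinearMap.comp_apply]
  have hv : (ContinuousLinearMap.pi fun b => fderiv ℝ (φ b) x) (Pi.single i 1)
      = ∑ a : Fin 2, pd i (φ a) x • (Pi.single a 1 : Fin 2 → ℝ) := by
    funext b
    fin_cases b <;> simp [pd, Pi.single_apply]
  rw [hv, map_sum]
  refine Finset.sum_congr rfl fun a _ => ?_
  rw [ContinuousLinearMap.map_smul, smul_eq_mul, mul_comm]
  rfl

end Aux

/-- if the `C²` map `φ : ℝ³ → ℝ²` is σ₂-critical with `C¹` potential `P̄`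
(`τ_{σ₂}(φ) = (∇P̄)∘φ`), then `V = ∇φ₁ × ∇φ₂` satisfies the steady incompressible Euler
equations with Bernoulli function `P̄∘φ`: `V × curl V = ∇(P̄∘φ)`, `div V = 0`, and
equivalently `(V·∇)V = -∇p` with `p = P̄∘φ − ½|V|²`. -/
theorem stmt7 (φ : Fin 2 → (Fin 3 → ℝ) → ℝ) (hφ : ∀ a, ContDiff ℝ 2 (φ a))
    (Pbar : (Fin 2 → ℝ) → ℝ) (hPbar : ContDiff ℝ 1 Pbar)
    (hcrit : ∀ (a : Fin 2) (x : Fin 3 → ℝ),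
      tau2 φ a x = fderiv ℝ Pbar (fun b => φ b x) (Pi.single a 1))
    (p : (Fin 3 → ℝ) → ℝ)
    (hp : p = fun x => Pbar (fun b => φ b x) - (1/2) * ∑ i, (Vfield φ x i) ^ 2) :
    (∀ x i, cross (Vfield φ x) (curl (Vfield φ) x) i
        = pd i (fun y => Pbar (fun b => φ b y)) x) ∧
    (∀ x, (∑ i, pd i (fun y => Vfield φ y i) x) = 0) ∧
    (∀ x i, (∑ j, Vfield φ x j * pd j (fun y => Vfield φ y i) x) = - pd i p x) := by
  have hdφ : ∀ a, Differentiable ℝ (φ a) := fun a => (hφ a).differentiable two_ne_zero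
  have hdp : ∀ (a : Fin 2) (i : Fin 3), Differentiable ℝ (fun y => pd i (φ a) y) :=
    fun a i => (contDiff_pd (hφ a) i).differentiable one_ne_zero
  have hdE : Differentiable ℝ (fun y => eDen φ y) :=
    Differentiable.fun_sum fun b _ => Differentiable.fun_sum fun k _ => (hdp b k).pow 2
  have hdC : ∀ (i j : Fin 3), Differentiable ℝ (fun y => CG φ i j y) :=
    fun i j => Differentiable.fun_sum fun b _ => (hdp b i).mul (hdp b j)
  have hdPφ : Differentiable ℝ (fun y => Pbar (fun b => φ b y)) :=
    (hPbar.differentiable one_ne_zero).comp (differentiable_pi.2 fun b => hdφ b)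
  -- components of V
  have hV0f : (fun y => Vfield φ y 0)
      = fun y => pd 1 (φ 0) y * pd 2 (φ 1) y - pd 2 (φ 0) y * pd 1 (φ 1) y := by
    funext y; simp [Vfield, cross]
  have hV1f : (fun y => Vfield φ y 1)
      = fun y => pd 2 (φ 0) y * pd 0 (φ 1) y - pd 0 (φ 0) y * pd 2 (φ 1) y := by
    funext y; simp [Vfield, cross]
  have hV2f : (fun y => Vfield φ y 2)
      = fun y => pd 0 (φ 0) y * pd 1 (φ 1) y - pd 1 (φ 0) y * pd 0 (φ 1) y := by
    funext y; simp [Vfield, cross]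
  have hVx0 : ∀ y, Vfield φ y 0
      = pd 1 (φ 0) y * pd 2 (φ 1) y - pd 2 (φ 0) y * pd 1 (φ 1) y := fun y => congrFun hV0f y
  have hVx1 : ∀ y, Vfield φ y 1
      = pd 2 (φ 0) y * pd 0 (φ 1) y - pd 0 (φ 0) y * pd 2 (φ 1) y := fun y => congrFun hV1f y
  have hVx2 : ∀ y, Vfield φ y 2
      = pd 0 (φ 0) y * pd 1 (φ 1) y - pd 1 (φ 0) y * pd 0 (φ 1) y := fun y => congrFun hV2f y
  have hdV : ∀ m : Fin 3, Differentiable ℝ (fun y => Vfield φ y m) := by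
    refine fin3_cases ?_ ?_ ?_
    · rw [hV0f]; exact ((hdp 0 1).mul (hdp 1 2)).sub ((hdp 0 2).mul (hdp 1 1))
    · rw [hV1f]; exact ((hdp 0 2).mul (hdp 1 0)).sub ((hdp 0 0).mul (hdp 1 2))
    · rw [hV2f]; exact ((hdp 0 0).mul (hdp 1 1)).sub ((hdp 0 1).mul (hdp 1 0))
  -- derivatives of the components of V
  have hW0 : ∀ (j : Fin 3) (x : Fin 3 → ℝ), pd j (fun y => Vfield φ y 0) x
      = pd j (fun y => pd 1 (φ 0) y) x * pd 2 (φ 1) x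
          + pd 1 (φ 0) x * pd j (fun y => pd 2 (φ 1) y) x
        - (pd j (fun y => pd 2 (φ 0) y) x * pd 1 (φ 1) x
          + pd 2 (φ 0) x * pd j (fun y => pd 1 (φ 1) y) x) := by
    intro j x
    rw [hV0f, pd_sub ((hdp 0 1 x).fun_mul (hdp 1 2 x)) ((hdp 0 2 x).fun_mul (hdp 1 1 x)),
        pd_mul (hdp 0 1 x) (hdp 1 2 x), pd_mul (hdp 0 2 x) (hdp 1 1 x)]
  have hW1 : ∀ (j : Fin 3) (x : Fin 3 → ℝ), pd j (fun y => Vfield φ y 1) x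
      = pd j (fun y => pd 2 (φ 0) y) x * pd 0 (φ 1) x
          + pd 2 (φ 0) x * pd j (fun y => pd 0 (φ 1) y) x
        - (pd j (fun y => pd 0 (φ 0) y) x * pd 2 (φ 1) x
          + pd 0 (φ 0) x * pd j (fun y => pd 2 (φ 1) y) x) := by
    intro j x
    rw [hV1f, pd_sub ((hdp 0 2 x).fun_mul (hdp 1 0 x)) ((hdp 0 0 x).fun_mul (hdp 1 2 x)),
        pd_mul (hdp 0 2 x) (hdp 1 0 x), pd_mul (hdp 0 0 x) (hdp 1 2 x)]
  have hW2 : ∀ (j : Fin 3) (x : Fin 3 → ℝ), pd j (fun y => Vfield φ y 2) x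
      = pd j (fun y => pd 0 (φ 0) y) x * pd 1 (φ 1) x
          + pd 0 (φ 0) x * pd j (fun y => pd 1 (φ 1) y) x
        - (pd j (fun y => pd 1 (φ 0) y) x * pd 0 (φ 1) x
          + pd 1 (φ 0) x * pd j (fun y => pd 0 (φ 1) y) x) := by
    intro j x
    rw [hV2f, pd_sub ((hdp 0 0 x).fun_mul (hdp 1 1 x)) ((hdp 0 1 x).fun_mul (hdp 1 0 x)),
        pd_mul (hdp 0 0 x) (hdp 1 1 x), pd_mul (hdp 0 1 x) (hdp 1 0 x)]
  -- derivatives of eDen and CG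
  have hpdE : ∀ (k : Fin 3) (x : Fin 3 → ℝ), pd k (fun y => eDen φ y) x
      = ∑ b : Fin 2, ∑ m : Fin 3, 2 * pd m (φ b) x * pd k (fun y => pd m (φ b) y) x := by
    intro k x
    have h1 : (fun y => eDen φ y) = fun y => ∑ b : Fin 2, ∑ m : Fin 3, pd m (φ b) y ^ 2 := rfl
    rw [h1, pd_sum _ _ (fun b _ => DifferentiableAt.fun_sum fun m _ => ((hdp b m) x).fun_pow 2)]
    refine Finset.sum_congr rfl fun b _ => ?_
    rw [pd_sum _ _ (fun m _ => ((hdp b m) x).fun_pow 2)]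
    exact Finset.sum_congr rfl fun m _ => pd_sq ((hdp b m) x)
  have hpdC : ∀ (i j k : Fin 3) (x : Fin 3 → ℝ), pd k (fun y => CG φ i j y) x
      = ∑ b : Fin 2, (pd k (fun y => pd i (φ b) y) x * pd j (φ b) x
          + pd i (φ b) x * pd k (fun y => pd j (φ b) y) x) := by
    intro i j k x
    have h1 : (fun y => CG φ i j y) = fun y => ∑ b : Fin 2, pd i (φ b) y * pd j (φ b) y := rfl
    rw [h1, pd_sum _ _ (fun b _ => ((hdp b i) x).fun_mul ((hdp b j) x))]
    exact Finset.sum_congr rfl fun b _ => pd_mul ((hdp b i) x) ((hdp b j) x)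
  -- the tau2 summand
  have htt : ∀ (a : Fin 2) (j : Fin 3) (x : Fin 3 → ℝ),
      pd j (fun y => eDen φ y * pd j (φ a) y - ∑ i : Fin 3, CG φ i j y * pd i (φ a) y) x
      = pd j (fun y => eDen φ y) x * pd j (φ a) x + eDen φ x * pd j (fun y => pd j (φ a) y) x
        - ∑ i : Fin 3, (pd j (fun y => CG φ i j y) x * pd i (φ a) x
            + CG φ i j x * pd j (fun y => pd i (φ a) y) x) := by
    intro a j x
    rw [pd_sub ((hdE x).fun_mul (hdp a j x))
        (DifferentiableAt.fun_sum fun i _ => ((hdC i j) x).fun_mul (hdp a i x)),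
        pd_mul (hdE x) (hdp a j x),
        pd_sum _ _ (fun i _ => ((hdC i j) x).fun_mul (hdp a i x))]
    congr 1
    exact Finset.sum_congr rfl fun i _ => pd_mul ((hdC i j) x) (hdp a i x)
  -- squared-component derivative (for the pressure)
  have hpdVsq : ∀ (k m : Fin 3) (x : Fin 3 → ℝ), pd k (fun y => Vfield φ y m ^ 2) x
      = 2 * Vfield φ x m * pd k (fun y => Vfield φ y m) x := fun k m x => pd_sq (hdV m x)
  -- Part 1
  have h1 : ∀ (x : Fin 3 → ℝ) (i : Fin 3), cross (Vfield φ x) (curl (Vfield φ) x) i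
      = pd i (fun y => Pbar (fun b => φ b y)) x := by
    intro x i
    rw [pd_comp φ hφ Pbar hPbar i x]
    simp only [← hcrit, tau2, htt, hpdE, hpdC]
    revert i
    refine fin3_cases ?_ ?_ ?_ <;>
    · simp [cross, curl]
      simp only [hW0, hW1, hW2]
      simp only [hVx0, hVx1, hVx2]
      simp only [eDen, CG]
      simp only [Fin.sum_univ_two, Fin.sum_univ_three]
      simp only [pd_comm (hφ 0) 1 0, pd_comm (hφ 0) 2 0, pd_comm (hφ 0) 2 1,
        pd_comm (hφ 1) 1 0, pd_comm (hφ 1) 2 0, pd_comm (hφ 1) 2 1]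
      ring
  -- Part 2
  have h2 : ∀ x : Fin 3 → ℝ, (∑ i, pd i (fun y => Vfield φ y i) x) = 0 := by
    intro x
    rw [Fin.sum_univ_three, hW0 0 x, hW1 1 x, hW2 2 x]
    simp only [pd_comm (hφ 0) 1 0, pd_comm (hφ 0) 2 0, pd_comm (hφ 0) 2 1,
      pd_comm (hφ 1) 1 0, pd_comm (hφ 1) 2 0, pd_comm (hφ 1) 2 1]
    ring
  -- Part 3
  have h3 : ∀ (x : Fin 3 → ℝ) (i : Fin 3),
      (∑ j, Vfield φ x j * pd j (fun y => Vfield φ y i) x) = - pd i p x := by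
    intro x i
    rw [hp, pd_sub (hdPφ x) (((Differentiable.fun_sum
          (fun m (_ : m ∈ Finset.univ) => (hdV m).fun_pow 2)).const_mul (1/2 : ℝ)) x),
        pd_const_mul _ ((Differentiable.fun_sum fun m (_ : m ∈ Finset.univ) => (hdV m).fun_pow 2) x),
        pd_sum _ _ (fun m _ => ((hdV m).fun_pow 2) x)]
    simp only [hpdVsq]
    rw [← h1 x i]
    revert i
    refine fin3_cases ?_ ?_ ?_ <;>
    · simp [cross, curl, Fin.sum_univ_three]
      ring
  exact ⟨h1, h2, h3⟩
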